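/- Let D be a strongly connected digraph of girth 4 and let C = (u,v,w,z,u) be a 4-cycle of D. If the digraph D − {u,v,w,z} contains an arc, then D is λ'-connected and λ'(D) ≤ ξ(C), where ξ(C) = min{ d⁺(u)+d⁺(v)+d⁺(w)+d⁺(z) − 4 , d⁻(u)+d⁻(v)+d⁻(w)+d⁻(z) − 4 }. -/

import Mathlib

/-- A digraph on vertex type `V`, given by its adjacency (arc) relation. -/
structure Digr (V : Type) where
  Adj : V → V → Prop

namespace Digr

variable {V : Type}

/-- Reachability by directed paths. -/
def Reach (D : Digr V) : V → V → Prop := Relation.ReflTransGen D.Adj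

/-- A digraph is strongly connected if every vertex reaches every other. -/
def StronglyConnected (D : Digr V) : Prop := ∀ u v : V, D.Reach u v

/-- An oriented graph: no loops and no pair of opposite arcs. -/
def Oriented (D : Digr V) : Prop := ∀ u v : V, D.Adj u v → ¬ D.Adj v u

/-- The digraph contains at least one arc. -/
def HasArc (D : Digr V) : Prop := ∃ u v : V, D.Adj u v

/-- Delete a set of arcs. -/
def delArcs (D : Digr V) (S : Set (V × V)) : Digr V :=
  ⟨fun a b => D.Adj a b ∧ (a, b) ∉ S⟩

/-- Delete a set of vertices (keep arcs avoiding them). -/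
def delVerts (D : Digr V) (X : Set V) : Digr V :=
  ⟨fun a b => D.Adj a b ∧ a ∉ X ∧ b ∉ X⟩

/-- Induced subdigraph on a vertex set. -/
def induce (D : Digr V) (X : Set V) : Digr V :=
  ⟨fun a b => a ∈ X ∧ b ∈ X ∧ D.Adj a b⟩

/-- The induced subdigraph on `X` is strongly connected. -/
def StronglyConnectedOn (D : Digr V) (X : Set V) : Prop :=
  ∀ u ∈ X, ∀ v ∈ X, (D.induce X).Reach u v

/-- Mutual reachability. -/
def MReach (D : Digr V) (u v : V) : Prop := D.Reach u v ∧ D.Reach v u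

/-- `X` is a strong component: an equivalence class of mutual reachability. -/
def IsStrongComponent (D : Digr V) (X : Set V) : Prop :=
  ∃ x : V, X = {y | D.MReach x y}

/-- `S` is a restricted arc-cut: a set of arcs whose deletion leaves a
non-trivial strong component `X` (containing an arc) such that deleting the
vertices of `X` from `D` leaves an arc. -/
def IsRestrictedArcCut (D : Digr V) (S : Set (V × V)) : Prop :=
  (∀ p ∈ S, D.Adj p.1 p.2) ∧
  ∃ X : Set V, (D.delArcs S).IsStrongComponent X ∧
    (∃ u ∈ X, ∃ v ∈ X, (D.delArcs S).Adj u v) ∧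
    (D.delVerts X).HasArc

/-- A digraph is λ'-connected if it admits a restricted arc-cut. -/
def LambdaPrimeConnected (D : Digr V) : Prop :=
  ∃ S : Set (V × V), D.IsRestrictedArcCut S

/-- λ'(D): minimum size of a restricted arc-cut. -/
noncomputable def lambdaPrime (D : Digr V) [Fintype V] : ℕ :=
  sInf {n : ℕ | ∃ S : Finset (V × V), D.IsRestrictedArcCut ↑S ∧ S.card = n}

/-- λ(D): the arc-connectivity, the minimum size of an arc set whose removal
destroys strong connectivity. -/
noncomputable def lambda (D : Digr V) [Fintype V] : ℕ :=
  sInf {n : ℕ | ∃ S : Finset (V × V), (∀ p ∈ S, D.Adj p.1 p.2) ∧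
    ¬ (D.delArcs ↑S).StronglyConnected ∧ S.card = n}

/-- The list `l` of distinct vertices forms a directed cycle. -/
def IsCycleList (D : Digr V) (l : List V) : Prop :=
  ∃ h : l ≠ [], l.Nodup ∧ l.Chain' D.Adj ∧ D.Adj (l.getLast h) (l.head h)

/-- The girth: minimum length of a directed cycle. -/
noncomputable def girth (D : Digr V) : ℕ :=
  sInf {n : ℕ | ∃ l : List V, D.IsCycleList l ∧ l.length = n}

/-- `(u,v,w,z,u)` is a 4-cycle of `D`. -/
def Cycle4 (D : Digr V) (u v w z : V) : Prop := D.IsCycleList [u, v, w, z]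

/-- Out-degree. -/
def outDeg (D : Digr V) [Fintype V] [DecidableRel D.Adj] (v : V) : ℕ :=
  (Finset.univ.filter fun w => D.Adj v w).card

/-- In-degree. -/
def inDeg (D : Digr V) [Fintype V] [DecidableRel D.Adj] (v : V) : ℕ :=
  (Finset.univ.filter fun w => D.Adj w v).card

/-- ξ(D): minimum over girth cycles `C` of
`min (Σ d⁺ − g, Σ d⁻ − g)`. -/
noncomputable def xi (D : Digr V) [Fintype V] [DecidableRel D.Adj] : ℤ :=
  sInf {k : ℤ | ∃ l : List V, D.IsCycleList l ∧ l.length = D.girth ∧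
    k = min (((l.map D.outDeg).sum : ℤ) - (D.girth : ℤ))
            (((l.map D.inDeg).sum : ℤ) - (D.girth : ℤ))}

/-- ∂⁺(X): the set of arcs from `X` to its complement. -/
noncomputable def outBoundary (D : Digr V) [Fintype V] (X : Set V) : Finset (V × V) :=
  (Set.toFinite {p : V × V | p.1 ∈ X ∧ p.2 ∉ X ∧ D.Adj p.1 p.2}).toFinset

/-- ∂⁻(X): the set of arcs from the complement of `X` into `X`. -/
noncomputable def inBoundary (D : Digr V) [Fintype V] (X : Set V) : Finset (V × V) :=
  (Set.toFinite {p : V × V | p.1 ∉ X ∧ p.2 ∈ X ∧ D.Adj p.1 p.2}).toFinset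

/-- The list of arcs of a cycle given as a vertex list. -/
def cycleArcs (l : List V) : List (V × V) := l.zip (l.rotate 1)

end Digr

section Aux

variable {V : Type}

lemma aux_reach_forward [Fintype V] (D : Digr V) (X : Set V)
    {a b : V} (h : (D.delArcs ↑(D.outBoundary X)).Reach a b) : a ∈ X → b ∈ X := by
  induction h with
  | refl => exact id
  | tail _ hcb ih =>
    intro ha
    have hc := ih ha
    by_contra hb
    exact hcb.2 (by
      simp only [Finset.mem_coe, Digr.outBoundary, Set.Finite.mem_toFinset]
      exact ⟨hc, hb, hcb.1⟩)

lemma aux_reach_backward [Fintype V] (D : Digr V) (X : Set V)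
    {a b : V} (h : (D.delArcs ↑(D.inBoundary X)).Reach a b) : b ∈ X → a ∈ X := by
  induction h with
  | refl => exact id
  | tail _ hcb ih =>
    intro hb
    apply ih
    by_contra hc
    exact hcb.2 (by
      simp only [Finset.mem_coe, Digr.inBoundary, Set.Finite.mem_toFinset]
      exact ⟨hc, hb, hcb.1⟩)

lemma aux_cut [Fintype V] (D : Digr V) {u v w z : V}
    (huv : D.Adj u v) (hvw : D.Adj v w) (hwz : D.Adj w z) (hzu : D.Adj z u)
    (hArc : (D.delVerts {u, v, w, z}).HasArc)
    (S : Finset (V × V)) (hSadj : ∀ p ∈ S, D.Adj p.1 p.2)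
    (hcomp : ∀ y, (D.delArcs ↑S).MReach u y → y ∈ ({u, v, w, z} : Set V))
    (h1 : (u, v) ∉ S) (h2 : (v, w) ∉ S) (h3 : (w, z) ∉ S) (h4 : (z, u) ∉ S) :
    D.IsRestrictedArcCut ↑S := by
  have a1 : (D.delArcs ↑S).Adj u v := ⟨huv, by simpa using h1⟩
  have a2 : (D.delArcs ↑S).Adj v w := ⟨hvw, by simpa using h2⟩
  have a3 : (D.delArcs ↑S).Adj w z := ⟨hwz, by simpa using h3⟩
  have a4 : (D.delArcs ↑S).Adj z u := ⟨hzu, by simpa using h4⟩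
  have muu : (D.delArcs ↑S).MReach u u := ⟨.refl, .refl⟩
  have muv : (D.delArcs ↑S).MReach u v :=
    ⟨.single a1, ((Relation.ReflTransGen.single a2).trans (.single a3)).trans (.single a4)⟩
  refine ⟨fun p hp => hSadj p (by simpa using hp), {y | (D.delArcs ↑S).MReach u y},
    ⟨u, rfl⟩, ⟨u, muu, v, muv, a1⟩, ?_⟩
  obtain ⟨a, b, hab, ha, hb⟩ := hArc
  exact ⟨a, b, hab, fun h => ha (hcomp a h), fun h => hb (hcomp b h)⟩

lemma aux_card_out [Fintype V] (D : Digr V) [DecidableRel D.Adj] {u v w z : V}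
    (huvne : u ≠ v) (huwne : u ≠ w) (huzne : u ≠ z)
    (hvwne : v ≠ w) (hvzne : v ≠ z) (hwzne : w ≠ z)
    (huv : D.Adj u v) (hvw : D.Adj v w) (hwz : D.Adj w z) (hzu : D.Adj z u) :
    (D.outBoundary {u, v, w, z}).card + 4 ≤
      D.outDeg u + D.outDeg v + D.outDeg w + D.outDeg z := by
  classical
  set T : Finset V := {u, v, w, z} with hT
  set A : Finset (V × V) := Finset.univ.filter (fun p => p.1 ∈ T ∧ D.Adj p.1 p.2) with hA
  have hAcard : A.card = ∑ x ∈ T, D.outDeg x := by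
    rw [Finset.card_eq_sum_card_fiberwise
      (f := Prod.fst) (t := T) (fun p hp => (Finset.mem_filter.mp hp).2.1)]
    refine Finset.sum_congr rfl fun x hx => ?_
    have : A.filter (fun p => p.1 = x) =
        (Finset.univ.filter (fun y => D.Adj x y)).image (fun y => (x, y)) := by
      ext ⟨a, b⟩
      simp only [hA, Finset.mem_filter, Finset.mem_univ, true_and, Finset.mem_image]
      constructor
      · rintro ⟨⟨_, hadj⟩, rfl⟩; exact ⟨b, hadj, rfl⟩
      · rintro ⟨y, hy, heq⟩
        obtain ⟨rfl, rfl⟩ := Prod.mk.injEq _ _ _ _ ▸ heq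
        exact ⟨⟨hx, hy⟩, rfl⟩
    rw [this, Finset.card_image_of_injective _ (fun y1 y2 h => (Prod.ext_iff.mp h).2)]
    rfl
  have hsum : ∑ x ∈ T, D.outDeg x =
      D.outDeg u + D.outDeg v + D.outDeg w + D.outDeg z := by
    rw [hT]
    rw [show ({u, v, w, z} : Finset V) = insert u (insert v (insert w {z})) from rfl]
    rw [Finset.sum_insert (by simp [huvne, huwne, huzne]),
      Finset.sum_insert (by simp [hvwne, hvzne]),
      Finset.sum_insert (by simp [hwzne]), Finset.sum_singleton]
    ring
  set B : Finset (V × V) := {(u, v), (v, w), (w, z), (z, u)} with hB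
  have hBcard : B.card = 4 := by
    rw [hB]
    rw [Finset.card_insert_of_notMem (by simp [Prod.ext_iff, huvne, huwne, huzne, hvwne]),
      Finset.card_insert_of_notMem (by simp [Prod.ext_iff, hvwne, hvzne, huvne]),
      Finset.card_insert_of_notMem (by simp [Prod.ext_iff, hwzne, huwne]),
      Finset.card_singleton]
  have hdisj : Disjoint (D.outBoundary {u, v, w, z}) B := by
    rw [Finset.disjoint_left]
    intro p hp hpB
    have hp2 : p.2 ∉ ({u, v, w, z} : Set V) := by
      have := (Set.Finite.mem_toFinset _).mp hp
      exact this.2.1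
    apply hp2
    rw [hB] at hpB
    simp only [Finset.mem_insert, Finset.mem_singleton] at hpB
    rcases hpB with h | h | h | h <;> subst h <;> simp
  have hsub : D.outBoundary {u, v, w, z} ∪ B ⊆ A := by
    intro p hp
    rw [Finset.mem_union] at hp
    rw [hA, Finset.mem_filter]
    rcases hp with hp | hp
    · have := (Set.Finite.mem_toFinset _).mp hp
      refine ⟨Finset.mem_univ _, ?_, this.2.2⟩
      have h1 := this.1
      simp only [Set.mem_insert_iff, Set.mem_singleton_iff] at h1
      simp [hT, Finset.mem_insert, h1]
    · rw [hB] at hp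
      simp only [Finset.mem_insert, Finset.mem_singleton] at hp
      rcases hp with h | h | h | h <;> subst h <;>
        exact ⟨Finset.mem_univ _, by simp [hT], by assumption⟩
  calc (D.outBoundary {u, v, w, z}).card + 4
      = (D.outBoundary {u, v, w, z} ∪ B).card := by
        rw [Finset.card_union_of_disjoint hdisj, hBcard]
    _ ≤ A.card := Finset.card_le_card hsub
    _ = _ := by rw [hAcard, hsum]

lemma aux_card_in [Fintype V] (D : Digr V) [DecidableRel D.Adj] {u v w z : V}
    (huvne : u ≠ v) (huwne : u ≠ w) (huzne : u ≠ z)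
    (hvwne : v ≠ w) (hvzne : v ≠ z) (hwzne : w ≠ z)
    (huv : D.Adj u v) (hvw : D.Adj v w) (hwz : D.Adj w z) (hzu : D.Adj z u) :
    (D.inBoundary {u, v, w, z}).card + 4 ≤
      D.inDeg u + D.inDeg v + D.inDeg w + D.inDeg z := by
  classical
  set T : Finset V := {u, v, w, z} with hT
  set A : Finset (V × V) := Finset.univ.filter (fun p => p.2 ∈ T ∧ D.Adj p.1 p.2) with hA
  have hAcard : A.card = ∑ x ∈ T, D.inDeg x := by
    rw [Finset.card_eq_sum_card_fiberwise
      (f := Prod.snd) (t := T) (fun p hp => (Finset.mem_filter.mp hp).2.1)]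
    refine Finset.sum_congr rfl fun x hx => ?_
    have : A.filter (fun p => p.2 = x) =
        (Finset.univ.filter (fun y => D.Adj y x)).image (fun y => (y, x)) := by
      ext ⟨a, b⟩
      simp only [hA, Finset.mem_filter, Finset.mem_univ, true_and, Finset.mem_image]
      constructor
      · rintro ⟨⟨_, hadj⟩, rfl⟩; exact ⟨a, hadj, rfl⟩
      · rintro ⟨y, hy, heq⟩
        obtain ⟨rfl, rfl⟩ := Prod.mk.injEq _ _ _ _ ▸ heq
        exact ⟨⟨hx, hy⟩, rfl⟩
    rw [this, Finset.card_image_of_injective _ (fun y1 y2 h => (Prod.ext_iff.mp h).1)]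
    rfl
  have hsum : ∑ x ∈ T, D.inDeg x =
      D.inDeg u + D.inDeg v + D.inDeg w + D.inDeg z := by
    rw [hT]
    rw [show ({u, v, w, z} : Finset V) = insert u (insert v (insert w {z})) from rfl]
    rw [Finset.sum_insert (by simp [huvne, huwne, huzne]),
      Finset.sum_insert (by simp [hvwne, hvzne]),
      Finset.sum_insert (by simp [hwzne]), Finset.sum_singleton]
    ring
  set B : Finset (V × V) := {(u, v), (v, w), (w, z), (z, u)} with hB
  have hBcard : B.card = 4 := by
    rw [hB]
    rw [Finset.card_insert_of_notMem (by simp [Prod.ext_iff, huvne, huwne, huzne, hvwne]),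
      Finset.card_insert_of_notMem (by simp [Prod.ext_iff, hvwne, hvzne, huvne]),
      Finset.card_insert_of_notMem (by simp [Prod.ext_iff, hwzne, huwne]),
      Finset.card_singleton]
  have hdisj : Disjoint (D.inBoundary {u, v, w, z}) B := by
    rw [Finset.disjoint_left]
    intro p hp hpB
    have hp1 : p.1 ∉ ({u, v, w, z} : Set V) := by
      have := (Set.Finite.mem_toFinset _).mp hp
      exact this.1
    apply hp1
    rw [hB] at hpB
    simp only [Finset.mem_insert, Finset.mem_singleton] at hpB
    rcases hpB with h | h | h | h <;> subst h <;> simp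
  have hsub : D.inBoundary {u, v, w, z} ∪ B ⊆ A := by
    intro p hp
    rw [Finset.mem_union] at hp
    rw [hA, Finset.mem_filter]
    rcases hp with hp | hp
    · have := (Set.Finite.mem_toFinset _).mp hp
      refine ⟨Finset.mem_univ _, ?_, this.2.2⟩
      have h1 := this.2.1
      simp only [Set.mem_insert_iff, Set.mem_singleton_iff] at h1
      simp [hT, Finset.mem_insert, h1]
    · rw [hB] at hp
      simp only [Finset.mem_insert, Finset.mem_singleton] at hp
      rcases hp with h | h | h | h <;> subst h <;>
        exact ⟨Finset.mem_univ _, by simp [hT], by assumption⟩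
  calc (D.inBoundary {u, v, w, z}).card + 4
      = (D.inBoundary {u, v, w, z} ∪ B).card := by
        rw [Finset.card_union_of_disjoint hdisj, hBcard]
    _ ≤ A.card := Finset.card_le_card hsub
    _ = _ := by rw [hAcard, hsum]

end Aux

/-- If `D` is strong of girth 4, `(u,v,w,z,u)` is a 4-cycle and
`D − {u,v,w,z}` contains an arc, then `D` is λ'-connected and `λ'(D) ≤ ξ(C)`. -/
theorem stmt4 {V : Type} [Fintype V] (D : Digr V) [DecidableRel D.Adj]
    (hO : D.Oriented) (hS : D.StronglyConnected) (hg : D.girth = 4)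
    (u v w z : V) (hC : D.Cycle4 u v w z)
    (hArc : (D.delVerts {u, v, w, z}).HasArc) :
    D.LambdaPrimeConnected ∧
      (D.lambdaPrime : ℤ) ≤
        min ((D.outDeg u + D.outDeg v + D.outDeg w + D.outDeg z : ℤ) - 4)
            ((D.inDeg u + D.inDeg v + D.inDeg w + D.inDeg z : ℤ) - 4) := by
  classical
  obtain ⟨hne, hnd, hch, hlast⟩ := hC
  simp only [List.Chain', List.isChain_cons_cons, List.isChain_singleton, and_true] at hch
  obtain ⟨huv, hvw, hwz⟩ := hch
  have hzu : D.Adj z u := by simpa using hlast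
  have hd : u ≠ v ∧ (u ≠ w ∧ (u ≠ z ∧ (v ≠ w ∧ (v ≠ z ∧ w ≠ z)))) := by
    simp only [List.nodup_cons, List.mem_cons, List.mem_singleton,
      List.not_mem_nil, or_false, not_or, List.nodup_nil, and_true] at hnd
    tauto
  obtain ⟨huvne, huwne, huzne, hvwne, hvzne, hwzne⟩ := hd
  set X : Set V := {u, v, w, z} with hX
  have huX : u ∈ X := by simp [hX]
  have hvX : v ∈ X := by simp [hX]
  have hwX : w ∈ X := by simp [hX]
  have hzX : z ∈ X := by simp [hX]
  -- out-boundary cut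
  have houtnon : ∀ a b : V, a ∈ X → b ∈ X → D.Adj a b → (a, b) ∉ D.outBoundary X := by
    intro a b ha hb _ h
    exact ((Set.Finite.mem_toFinset _).mp h).2.1 hb
  have hinnon : ∀ a b : V, a ∈ X → b ∈ X → D.Adj a b → (a, b) ∉ D.inBoundary X := by
    intro a b ha hb _ h
    exact ((Set.Finite.mem_toFinset _).mp h).1 ha
  have hcompOut : ∀ y, (D.delArcs ↑(D.outBoundary X)).MReach u y → y ∈ X :=
    fun y hy => aux_reach_forward D X hy.1 huX
  have hcompIn : ∀ y, (D.delArcs ↑(D.inBoundary X)).MReach u y → y ∈ X :=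
    fun y hy => aux_reach_backward D X hy.2 huX
  have hSadjOut : ∀ p ∈ D.outBoundary X, D.Adj p.1 p.2 :=
    fun p hp => ((Set.Finite.mem_toFinset _).mp hp).2.2
  have hSadjIn : ∀ p ∈ D.inBoundary X, D.Adj p.1 p.2 :=
    fun p hp => ((Set.Finite.mem_toFinset _).mp hp).2.2
  have hcutOut : D.IsRestrictedArcCut ↑(D.outBoundary X) :=
    aux_cut D huv hvw hwz hzu hArc _ hSadjOut hcompOut
      (houtnon u v huX hvX huv) (houtnon v w hvX hwX hvw)
      (houtnon w z hwX hzX hwz) (houtnon z u hzX huX hzu)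
  have hcutIn : D.IsRestrictedArcCut ↑(D.inBoundary X) :=
    aux_cut D huv hvw hwz hzu hArc _ hSadjIn hcompIn
      (hinnon u v huX hvX huv) (hinnon v w hvX hwX hvw)
      (hinnon w z hwX hzX hwz) (hinnon z u hzX huX hzu)
  refine ⟨⟨_, hcutOut⟩, ?_⟩
  have hleOut : D.lambdaPrime ≤ (D.outBoundary X).card :=
    Nat.sInf_le ⟨D.outBoundary X, hcutOut, rfl⟩
  have hleIn : D.lambdaPrime ≤ (D.inBoundary X).card :=
    Nat.sInf_le ⟨D.inBoundary X, hcutIn, rfl⟩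
  have hco := aux_card_out D huvne huwne huzne hvwne hvzne hwzne huv hvw hwz hzu
  have hci := aux_card_in D huvne huwne huzne hvwne hvzne hwzne huv hvw hwz hzu
  rw [le_min_iff]
  constructor
  · have : (D.lambdaPrime : ℤ) + 4 ≤
        (D.outDeg u + D.outDeg v + D.outDeg w + D.outDeg z : ℤ) := by
      exact_mod_cast Nat.add_le_add_right hleOut 4 |>.trans hco
    omega
  · have : (D.lambdaPrime : ℤ) + 4 ≤
        (D.inDeg u + D.inDeg v + D.inDeg w + D.inDeg z : ℤ) := by
      exact_mod_cast Nat.add_le_add_right hleIn 4 |>.trans hci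
    omega
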